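/- Suppose the family Λ ⊗ Γ = {(V_i ⊗ W_j, Λ_i ⊗ Γ_j, v_i w_j)}_{i,j} is a g-fusion frame for H ⊗ K with bounds A, B (the frame inequality holding on all elementary tensors f ⊗ g). Then Λ = {(V_i, Λ_i, v_i)}_{i∈I} is a g-fusion frame for H and Γ = {(W_j, Γ_j, w_j)}_{j∈J} is a g-fusion frame for K. -/

import Mathlib

noncomputable section

open Submodule ContinuousLinearMap

local notation "⟪" x ", " y "⟫" => @inner ℂ _ _ x y

/-- An abstract realization of the Hilbert-space tensor product of `H` and `K`:
a map `tmul : H → K → E` whose inner products multiply and whose elementary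
tensors have dense span. -/
structure HilbertTensor (H K E : Type*) [NormedAddCommGroup H] [InnerProductSpace ℂ H]
    [NormedAddCommGroup K] [InnerProductSpace ℂ K]
    [NormedAddCommGroup E] [InnerProductSpace ℂ E] where
  tmul : H → K → E
  inner_tmul : ∀ (f f' : H) (g g' : K),
    ⟪tmul f g, tmul f' g'⟫ = ⟪f, f'⟫ * ⟪g, g'⟫
  dense_span : Dense (Submodule.span ℂ (Set.range fun p : H × K => tmul p.1 p.2) : Set E)

variable {H K E H' K' E' : Type*}
variable [NormedAddCommGroup H] [InnerProductSpace ℂ H]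
variable [NormedAddCommGroup K] [InnerProductSpace ℂ K]
variable [NormedAddCommGroup E] [InnerProductSpace ℂ E]
variable [NormedAddCommGroup H'] [InnerProductSpace ℂ H']
variable [NormedAddCommGroup K'] [InnerProductSpace ℂ K']
variable [NormedAddCommGroup E'] [InnerProductSpace ℂ E']

/-- The orthogonal projection onto a (closed) subspace, as an operator `H →L[ℂ] H`. -/
def projL (V : Submodule ℂ H) [HasOrthogonalProjection V] : H →L[ℂ] H :=
  V.subtypeL.comp (orthogonalProjection V)

/-- `R` is the tensor product operator `Q ⊗ T`, i.e. it is determined on elementary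
tensors by `(Q ⊗ T)(f ⊗ g) = Qf ⊗ Tg`. -/
def IsTensorOp (tp : HilbertTensor H K E) (tp' : HilbertTensor H' K' E')
    (Q : H →L[ℂ] H') (T : K →L[ℂ] K') (R : E →L[ℂ] E') : Prop :=
  ∀ (f : H) (g : K), R (tp.tmul f g) = tp'.tmul (Q f) (T g)

/-- The tensor product `V ⊗ W` of subspaces: the closure of the span of elementary
tensors of elements of `V` and `W`. -/
def tsub (tp : HilbertTensor H K E) (V : Submodule ℂ H) (W : Submodule ℂ K) : Submodule ℂ E :=
  (Submodule.span ℂ {x : E | ∃ f ∈ V, ∃ g ∈ W, x = tp.tmul f g}).topologicalClosure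

/-- `{(V i, Λ i, v i)}` is a g-fusion Bessel sequence in `H` with bound `B`. -/
def IsGFusionBessel {ι : Type*} {Hi : ι → Type*}
    [∀ i, NormedAddCommGroup (Hi i)] [∀ i, InnerProductSpace ℂ (Hi i)]
    (V : ι → Submodule ℂ H) [∀ i, HasOrthogonalProjection (V i)]
    (Λ : ∀ i, H →L[ℂ] Hi i) (v : ι → ℝ) (B : ℝ) : Prop :=
  (∀ i, 0 < v i) ∧ 0 < B ∧
    ∀ f : H, ∑' i, (v i) ^ 2 * ‖Λ i (projL (V i) f)‖ ^ 2 ≤ B * ‖f‖ ^ 2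

/-- `{(V i, Λ i, v i)}` is a g-fusion frame for `H` with bounds `A ≤ B`. -/
def IsGFusionFrame {ι : Type*} {Hi : ι → Type*}
    [∀ i, NormedAddCommGroup (Hi i)] [∀ i, InnerProductSpace ℂ (Hi i)]
    (V : ι → Submodule ℂ H) [∀ i, HasOrthogonalProjection (V i)]
    (Λ : ∀ i, H →L[ℂ] Hi i) (v : ι → ℝ) (A B : ℝ) : Prop :=
  (∀ i, 0 < v i) ∧ 0 < A ∧ A ≤ B ∧
    ∀ f : H, A * ‖f‖ ^ 2 ≤ ∑' i, (v i) ^ 2 * ‖Λ i (projL (V i) f)‖ ^ 2 ∧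
      ∑' i, (v i) ^ 2 * ‖Λ i (projL (V i) f)‖ ^ 2 ≤ B * ‖f‖ ^ 2


/-- The norm of an elementary tensor is the product of norms. -/
lemma HilbertTensor.norm_tmul (tp : HilbertTensor H K E) (f : H) (g : K) :
    ‖tp.tmul f g‖ = ‖f‖ * ‖g‖ := by
  have h := tp.inner_tmul f f g g
  rw [inner_self_eq_norm_sq_to_K, inner_self_eq_norm_sq_to_K, inner_self_eq_norm_sq_to_K] at h
  have h2 : (‖tp.tmul f g‖ : ℝ) ^ 2 = ‖f‖ ^ 2 * ‖g‖ ^ 2 := by exact_mod_cast h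
  have h3 := norm_nonneg (tp.tmul f g)
  have h4 : (0:ℝ) ≤ ‖f‖ * ‖g‖ := by positivity
  nlinarith [sq_nonneg (‖tp.tmul f g‖ - ‖f‖ * ‖g‖), sq_nonneg (‖tp.tmul f g‖ + ‖f‖ * ‖g‖)]

/-- The projection onto `V ⊗ W` of an elementary tensor is the tensor of projections. -/
lemma proj_tmul (tp : HilbertTensor H K E) (V : Submodule ℂ H) (W : Submodule ℂ K)
    [HasOrthogonalProjection V] [HasOrthogonalProjection W]
    [HasOrthogonalProjection (tsub tp V W)] (f : H) (g : K) :
    projL (tsub tp V W) (tp.tmul f g) = tp.tmul (projL V f) (projL W g) := by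
  have hmem : tp.tmul (projL V f) (projL W g) ∈ tsub tp V W :=
    Submodule.le_topologicalClosure _
      (Submodule.subset_span ⟨projL V f, Submodule.coe_mem _, projL W g, Submodule.coe_mem _, rfl⟩)
  refine eq_starProjection_of_mem_of_inner_eq_zero hmem ?_
  set d := tp.tmul f g - tp.tmul (projL V f) (projL W g) with hd
  have hker : tsub tp V W ≤ LinearMap.ker ((innerSL ℂ d : E →L[ℂ] ℂ) : E →ₗ[ℂ] ℂ) := by
    apply Submodule.topologicalClosure_minimal
    · rw [Submodule.span_le]
      rintro x ⟨u, hu, w', hw', rfl⟩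
      simp only [SetLike.mem_coe, LinearMap.mem_ker, ContinuousLinearMap.coe_coe, innerSL_apply_apply]
      have h1 : ⟪f - projL V f, u⟫ = 0 := by
        have := (Submodule.mem_orthogonal' V _).1 (sub_starProjection_mem_orthogonal (K := V) f)
        exact this u hu
      have h2 : ⟪g - projL W g, w'⟫ = 0 := by
        have := (Submodule.mem_orthogonal' W _).1 (sub_starProjection_mem_orthogonal (K := W) g)
        exact this w' hw'
      rw [inner_sub_left] at h1 h2
      rw [hd, inner_sub_left, tp.inner_tmul, tp.inner_tmul]
      have e1 : ⟪f, u⟫ = ⟪(projL V f : H), u⟫ := by linear_combination h1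
      have e2 : ⟪g, w'⟫ = ⟪(projL W g : K), w'⟫ := by linear_combination h2
      rw [e1, e2]; ring
    · exact ContinuousLinearMap.isClosed_ker (innerSL ℂ d)
  intro x hx
  exact hker hx

/-- if `Λ ⊗ Γ` is a g-fusion frame for `H ⊗ K` (the frame inequality
holding on all elementary tensors of nonzero vectors), then `Λ` is a g-fusion frame
for `H` and `Γ` is a g-fusion frame for `K`. -/
theorem stmt_8 {ι κ : Type*} [CompleteSpace H] [CompleteSpace K] [CompleteSpace E]
    [Nontrivial H] [Nontrivial K]
    {Hi : ι → Type*} [∀ i, NormedAddCommGroup (Hi i)] [∀ i, InnerProductSpace ℂ (Hi i)]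
    {Kj : κ → Type*} [∀ j, NormedAddCommGroup (Kj j)] [∀ j, InnerProductSpace ℂ (Kj j)]
    {Eij : ι → κ → Type*} [∀ i j, NormedAddCommGroup (Eij i j)]
    [∀ i j, InnerProductSpace ℂ (Eij i j)]
    (tp : HilbertTensor H K E) (tpij : ∀ i j, HilbertTensor (Hi i) (Kj j) (Eij i j))
    (V : ι → Submodule ℂ H) [∀ i, HasOrthogonalProjection (V i)]
    (W : κ → Submodule ℂ K) [∀ j, HasOrthogonalProjection (W j)]
    [∀ i j, HasOrthogonalProjection (tsub tp (V i) (W j))]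
    (Λ : ∀ i, H →L[ℂ] Hi i) (Γ : ∀ j, K →L[ℂ] Kj j)
    (v : ι → ℝ) (w : κ → ℝ) (hv : ∀ i, 0 < v i) (hw : ∀ j, 0 < w j)
    (A B : ℝ) (hA : 0 < A) (hAB : A ≤ B)
    (Rij : ∀ i j, E →L[ℂ] Eij i j)
    (hRij : ∀ i j, IsTensorOp tp (tpij i j) (Λ i) (Γ j) (Rij i j))
    (hframe : ∀ (f : H) (g : K), f ≠ 0 → g ≠ 0 →
      A * ‖tp.tmul f g‖ ^ 2 ≤
        ∑' p : ι × κ, (v p.1 * w p.2) ^ 2 *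
          ‖Rij p.1 p.2 (projL (tsub tp (V p.1) (W p.2)) (tp.tmul f g))‖ ^ 2 ∧
      ∑' p : ι × κ, (v p.1 * w p.2) ^ 2 *
          ‖Rij p.1 p.2 (projL (tsub tp (V p.1) (W p.2)) (tp.tmul f g))‖ ^ 2 ≤
        B * ‖tp.tmul f g‖ ^ 2) :
    (∃ A₁ B₁ : ℝ, IsGFusionFrame V Λ v A₁ B₁) ∧
      (∃ C₁ D₁ : ℝ, IsGFusionFrame W Γ w C₁ D₁) := by
  classical
  set a : H → ι → ℝ := fun f i => v i ^ 2 * ‖Λ i (projL (V i) f)‖ ^ 2 with ha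
  set b : K → κ → ℝ := fun g j => w j ^ 2 * ‖Γ j (projL (W j) g)‖ ^ 2 with hb
  have hterm : ∀ (f : H) (g : K) (p : ι × κ),
      (v p.1 * w p.2) ^ 2 *
        ‖Rij p.1 p.2 (projL (tsub tp (V p.1) (W p.2)) (tp.tmul f g))‖ ^ 2
        = a f p.1 * b g p.2 := by
    rintro f g ⟨i, j⟩
    rw [proj_tmul, hRij i j, HilbertTensor.norm_tmul]
    simp only [ha, hb]
    ring
  have hanonneg : ∀ f i, 0 ≤ a f i := fun f i => by simp only [ha]; positivity
  have hbnonneg : ∀ g j, 0 ≤ b g j := fun g j => by simp only [hb]; positivity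
  have hfr : ∀ (f : H) (g : K), f ≠ 0 → g ≠ 0 →
      A * (‖f‖ ^ 2 * ‖g‖ ^ 2) ≤ (∑' p : ι × κ, a f p.1 * b g p.2) ∧
      (∑' p : ι × κ, a f p.1 * b g p.2) ≤ B * (‖f‖ ^ 2 * ‖g‖ ^ 2) := by
    intro f g hf hg
    have h := hframe f g hf hg
    rw [tsum_congr (hterm f g), HilbertTensor.norm_tmul, mul_pow] at h
    exact h
  have hsum : ∀ (f : H) (g : K), f ≠ 0 → g ≠ 0 →
      Summable (fun p : ι × κ => a f p.1 * b g p.2) := by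
    intro f g hf hg
    by_contra hns
    have h0 := tsum_eq_zero_of_not_summable hns
    have h1 := (hfr f g hf hg).1
    rw [h0] at h1
    have hf' : 0 < ‖f‖ := norm_pos_iff.mpr hf
    have hg' : 0 < ‖g‖ := norm_pos_iff.mpr hg
    nlinarith [mul_pos hA (mul_pos (pow_pos hf' 2) (pow_pos hg' 2))]
  obtain ⟨f₀, hf₀⟩ := exists_ne (0 : H)
  obtain ⟨g₀, hg₀⟩ := exists_ne (0 : K)
  have hex : ∃ p : ι × κ, 0 < a f₀ p.1 * b g₀ p.2 := by
    by_contra hne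
    push_neg at hne
    have hz : ∀ p : ι × κ, a f₀ p.1 * b g₀ p.2 = 0 := fun p =>
      le_antisymm (hne p) (mul_nonneg (hanonneg _ _) (hbnonneg _ _))
    have h1 := (hfr f₀ g₀ hf₀ hg₀).1
    rw [tsum_congr hz, tsum_zero] at h1
    have hf' : 0 < ‖f₀‖ := norm_pos_iff.mpr hf₀
    have hg' : 0 < ‖g₀‖ := norm_pos_iff.mpr hg₀
    nlinarith [mul_pos hA (mul_pos (pow_pos hf' 2) (pow_pos hg' 2))]
  obtain ⟨⟨i₀, j₀⟩, hp⟩ := hex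
  have hai₀ : 0 < a f₀ i₀ := by nlinarith [hanonneg f₀ i₀, hbnonneg g₀ j₀]
  have hbj₀ : 0 < b g₀ j₀ := by nlinarith [hanonneg f₀ i₀, hbnonneg g₀ j₀]
  have hsb : ∀ (g : K), g ≠ 0 → Summable (b g) := by
    intro g hg
    have h1 : Summable (fun j => a f₀ i₀ * b g j) := by
      have := (hsum f₀ g hf₀ hg).comp_injective
        (i := fun j : κ => ((i₀, j) : ι × κ)) (fun x y h => (Prod.ext_iff.1 h).2)
      exact this
    exact (summable_mul_left_iff hai₀.ne').mp h1
  have hsa : ∀ (f : H), f ≠ 0 → Summable (a f) := by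
    intro f hf
    have h1 : Summable (fun i => a f i * b g₀ j₀) := by
      have := (hsum f g₀ hf hg₀).comp_injective
        (i := fun i : ι => ((i, j₀) : ι × κ)) (fun x y h => (Prod.ext_iff.1 h).1)
      exact this
    exact (summable_mul_right_iff hbj₀.ne').mp h1
  have hfact : ∀ (f : H) (g : K), f ≠ 0 → g ≠ 0 →
      (∑' p : ι × κ, a f p.1 * b g p.2) = (∑' i, a f i) * (∑' j, b g j) := by
    intro f g hf hg
    rw [Summable.tsum_prod' (hsum f g hf hg) (fun i => (hsum f g hf hg).prod_factor i)]
    have : ∀ i, (∑' j, a f i * b g j) = a f i * (∑' j, b g j) := fun i => tsum_mul_left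
    rw [tsum_congr this, tsum_mul_right]
  set Sa : ℝ := ∑' i, a f₀ i with hSa
  set Sb : ℝ := ∑' j, b g₀ j with hSb
  have hSapos : 0 < Sa :=
    lt_of_lt_of_le hai₀ (Summable.le_tsum (hsa f₀ hf₀) i₀ (fun i _ => hanonneg _ _))
  have hSbpos : 0 < Sb :=
    lt_of_lt_of_le hbj₀ (Summable.le_tsum (hsb g₀ hg₀) j₀ (fun j _ => hbnonneg _ _))
  have hg₀n : 0 < ‖g₀‖ := norm_pos_iff.mpr hg₀
  have hf₀n : 0 < ‖f₀‖ := norm_pos_iff.mpr hf₀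
  have hzeroa : ∀ i, a (0 : H) i = 0 := by
    intro i; simp only [ha, map_zero, norm_zero]; ring
  have hzerob : ∀ j, b (0 : K) j = 0 := by
    intro j; simp only [hb, map_zero, norm_zero]; ring
  constructor
  · refine ⟨A * ‖g₀‖ ^ 2 / Sb, B * ‖g₀‖ ^ 2 / Sb, hv, by positivity, ?_, ?_⟩
    · rw [div_le_div_iff₀ hSbpos hSbpos]
      nlinarith [mul_nonneg (mul_nonneg (sub_nonneg.mpr hAB) (sq_nonneg ‖g₀‖)) hSbpos.le]
    · intro f
      show A * ‖g₀‖ ^ 2 / Sb * ‖f‖ ^ 2 ≤ ∑' i, a f i ∧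
        (∑' i, a f i) ≤ B * ‖g₀‖ ^ 2 / Sb * ‖f‖ ^ 2
      rcases eq_or_ne f 0 with rfl | hf
      · rw [tsum_congr hzeroa, tsum_zero]
        simp
      · have h1 := hfr f g₀ hf hg₀
        rw [hfact f g₀ hf hg₀, ← hSb] at h1
        constructor
        · rw [div_mul_eq_mul_div, div_le_iff₀ hSbpos]
          calc A * ‖g₀‖ ^ 2 * ‖f‖ ^ 2 = A * (‖f‖ ^ 2 * ‖g₀‖ ^ 2) := by ring
            _ ≤ (∑' i, a f i) * Sb := h1.1
        · rw [div_mul_eq_mul_div, le_div_iff₀ hSbpos]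
          calc (∑' i, a f i) * Sb ≤ B * (‖f‖ ^ 2 * ‖g₀‖ ^ 2) := h1.2
            _ = B * ‖g₀‖ ^ 2 * ‖f‖ ^ 2 := by ring
  · refine ⟨A * ‖f₀‖ ^ 2 / Sa, B * ‖f₀‖ ^ 2 / Sa, hw, by positivity, ?_, ?_⟩
    · rw [div_le_div_iff₀ hSapos hSapos]
      nlinarith [mul_nonneg (mul_nonneg (sub_nonneg.mpr hAB) (sq_nonneg ‖f₀‖)) hSapos.le]
    · intro g
      show A * ‖f₀‖ ^ 2 / Sa * ‖g‖ ^ 2 ≤ ∑' j, b g j ∧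
        (∑' j, b g j) ≤ B * ‖f₀‖ ^ 2 / Sa * ‖g‖ ^ 2
      rcases eq_or_ne g 0 with rfl | hg
      · rw [tsum_congr hzerob, tsum_zero]
        simp
      · have h1 := hfr f₀ g hf₀ hg
        rw [hfact f₀ g hf₀ hg, ← hSa] at h1
        constructor
        · rw [div_mul_eq_mul_div, div_le_iff₀ hSapos]
          calc A * ‖f₀‖ ^ 2 * ‖g‖ ^ 2 = A * (‖f₀‖ ^ 2 * ‖g‖ ^ 2) := by ring
            _ ≤ Sa * (∑' j, b g j) := by rw [mul_comm] at h1 ⊢; exact h1.1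
            _ = (∑' j, b g j) * Sa := by ring
        · rw [div_mul_eq_mul_div, le_div_iff₀ hSapos]
          calc (∑' j, b g j) * Sa = Sa * (∑' j, b g j) := by ring
            _ ≤ B * (‖f₀‖ ^ 2 * ‖g‖ ^ 2) := h1.2
            _ = B * ‖f₀‖ ^ 2 * ‖g‖ ^ 2 := by ring
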